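/- arXiv:2011.03458 — 2 statements merged into one kernel-verified Lean document; each statement's English description precedes it below -/
import Mathlib

section
/- (Unimodality of the Gaussian coefficients.) Let n, k : ℕ and let m : ℕ satisfy 1 ≤ m and 2m ≤ nk. Then p(k,n,m−1) ≤ p(k,n,m). -/
open MvPolynomial

/-- The operator `D(I) = Σ_{i=1}^{n} i · a_{i-1} · ∂I/∂a_i`. -/
noncomputable def Dop (n : ℕ) :
    MvPolynomial (Fin (n+1)) ℚ →ₗ[ℚ] MvPolynomial (Fin (n+1)) ℚ :=
  ∑ i : Fin n, ((i : ℚ) + 1) •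
    ((LinearMap.mulLeft ℚ (X i.castSucc)).comp (pderiv i.succ).toLinearMap)

/-- The operator `Δ(I) = Σ_{i=0}^{n-1} (n-i) · a_{i+1} · ∂I/∂a_i`. -/
noncomputable def Δop (n : ℕ) :
    MvPolynomial (Fin (n+1)) ℚ →ₗ[ℚ] MvPolynomial (Fin (n+1)) ℚ :=
  ∑ i : Fin n, ((n : ℚ) - (i : ℚ)) •
    ((LinearMap.mulLeft ℚ (X i.succ)).comp (pderiv i.castSucc).toLinearMap)

/-- `Q_n(k,m)`: span of monomials of degree `k` and weight `m`. -/
noncomputable def Qspace (n k m : ℕ) : Submodule ℚ (MvPolynomial (Fin (n+1)) ℚ) :=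
  Submodule.span ℚ { p | ∃ ν : Fin (n+1) →₀ ℕ,
    (∑ i : Fin (n+1), ν i) = k ∧ (∑ i : Fin (n+1), (i : ℕ) * ν i) = m ∧ p = monomial ν (1 : ℚ) }

/-- `S_n(k,m)`: semi-invariants of degree `k` and weight `m`. -/
noncomputable def Sspace (n k m : ℕ) : Submodule ℚ (MvPolynomial (Fin (n+1)) ℚ) :=
  Qspace n k m ⊓ LinearMap.ker (Dop n)

/-- `p(k,n,m)`: number of partitions of `m` in a `k × n` rectangle. -/
def pRect (k n m : ℕ) : ℕ :=
  (Finset.univ.filter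
    (fun P : Nat.Partition m => Multiset.card P.parts ≤ k ∧ ∀ x ∈ P.parts, x ≤ n)).card

/-- Coefficient embedding `ℚ[a] → ℚ[z][a]`. -/
noncomputable def ιmap (n : ℕ) :
    MvPolynomial (Fin (n+1)) ℚ →+* MvPolynomial (Fin (n+1)) (Polynomial ℚ) :=
  MvPolynomial.map (Polynomial.C)

/-- The shear substitution `a_i ↦ a_i' = Σ_{j=0}^{i} C(i,j) a_{i-j} z^j`. -/
noncomputable def φmap (n : ℕ) :
    MvPolynomial (Fin (n+1)) ℚ →ₐ[ℚ] MvPolynomial (Fin (n+1)) (Polynomial ℚ) :=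
  aeval (fun i : Fin (n+1) => ∑ j ∈ Finset.range ((i : ℕ) + 1),
    (C ((Nat.choose (i : ℕ) j : Polynomial ℚ) * Polynomial.X ^ j)) *
      X (⟨(i : ℕ) - j, Nat.lt_of_le_of_lt (Nat.sub_le _ _) i.isLt⟩ : Fin (n+1)))

/-- The vertical shear substitution `a_i ↦ a_i'' = Σ_{j=0}^{n-i} C(n-i,j) a_{i+j} z^j`. -/
noncomputable def ψmap (n : ℕ) :
    MvPolynomial (Fin (n+1)) ℚ →ₐ[ℚ] MvPolynomial (Fin (n+1)) (Polynomial ℚ) :=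
  aeval (fun i : Fin (n+1) => ∑ j ∈ (Finset.range (n - (i : ℕ) + 1)).attach,
    (C ((Nat.choose (n - (i : ℕ)) j.1 : Polynomial ℚ) * Polynomial.X ^ j.1)) *
      X (⟨(i : ℕ) + j.1, by
        have h1 := Finset.mem_range.mp j.2
        have h2 := i.isLt
        omega⟩ : Fin (n+1)))

/-- The weighted total degree of `I`: max of `Σ_i i·ν_i` over monomials of `I`. -/
def wdeg (n : ℕ) (I : MvPolynomial (Fin (n+1)) ℚ) : ℕ :=
  I.support.sup (fun ν => ∑ i : Fin (n+1), (i : ℕ) * ν i)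

section AuxProof


noncomputable def Dder (n : ℕ) :
    Derivation ℚ (MvPolynomial (Fin (n+1)) ℚ) (MvPolynomial (Fin (n+1)) ℚ) :=
  ∑ i : Fin n, ((i : ℚ) + 1) • ((X i.castSucc : MvPolynomial (Fin (n+1)) ℚ) • pderiv i.succ)

noncomputable def Δder (n : ℕ) :
    Derivation ℚ (MvPolynomial (Fin (n+1)) ℚ) (MvPolynomial (Fin (n+1)) ℚ) :=
  ∑ i : Fin n, ((n : ℚ) - (i : ℚ)) • ((X i.succ : MvPolynomial (Fin (n+1)) ℚ) • pderiv i.castSucc)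

lemma Derivation.sum_apply' {R A M : Type*} [CommSemiring R] [CommSemiring A] [Algebra R A]
    [AddCommMonoid M] [Module A M] [Module R M] {ι : Type*} (s : Finset ι)
    (d : ι → Derivation R A M) (a : A) : (∑ i ∈ s, d i) a = ∑ i ∈ s, d i a := by
  classical
  induction s using Finset.induction with
  | empty => simp
  | insert _ _ h ih => simp [Finset.sum_insert h, ih]

/-- `j-1` (garbage at 0). -/
def predF {n : ℕ} (j : Fin (n+1)) : Fin (n+1) := ⟨(j : ℕ) - 1, by omega⟩
/-- `j+1` truncated at `n`. -/
def succF {n : ℕ} (j : Fin (n+1)) : Fin (n+1) := ⟨min ((j : ℕ) + 1) n, by omega⟩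

@[simp] lemma predF_val {n : ℕ} (j : Fin (n+1)) : (predF j : ℕ) = (j : ℕ) - 1 := rfl
@[simp] lemma succF_val {n : ℕ} (j : Fin (n+1)) : (succF j : ℕ) = min ((j : ℕ) + 1) n := rfl

lemma Dder_X (n : ℕ) (j : Fin (n+1)) :
    Dder n (X j) = (((j : ℕ) : ℚ)) • X (predF j) := by
  classical
  rw [Dder, Derivation.sum_apply']
  by_cases hj : (j : ℕ) = 0
  · rw [Finset.sum_eq_zero]
    · simp [hj]
    · intro i _
      have : j ≠ i.succ := by
        intro h; apply_fun (Fin.val) at h; simp at h; omega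
      simp [Derivation.smul_apply, pderiv_X_of_ne this]
  · have hn : 0 < n := by have := j.isLt; omega
    have hlt : (j : ℕ) - 1 < n := by have := j.isLt; omega
    set i₀ : Fin n := ⟨(j : ℕ) - 1, hlt⟩ with hi₀
    have hsucc : i₀.succ = j := by
      apply Fin.ext; simp [hi₀]; omega
    rw [Finset.sum_eq_single i₀]
    · rw [Derivation.smul_apply, Derivation.smul_apply, hsucc, pderiv_X_self]
      have h1 : 1 ≤ (j : ℕ) := by omega
      have hc : ((i₀ : ℕ) : ℚ) + 1 = ((j : ℕ) : ℚ) := by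
        rw [hi₀]; push_cast [Nat.cast_sub h1]; ring
      have hcast : i₀.castSucc = predF j := by
        apply Fin.ext; simp [predF, hi₀]
      rw [smul_eq_mul, mul_one, hcast, hc]
    · intro i _ hne
      have : j ≠ i.succ := by
        intro h; apply hne; apply Fin.ext; apply_fun (Fin.val) at h; simp at h; show (i:ℕ) = (j:ℕ) - 1; omega
      simp [Derivation.smul_apply, pderiv_X_of_ne this]
    · intro h; exact absurd (Finset.mem_univ _) h

lemma Δder_X (n : ℕ) (j : Fin (n+1)) :
    Δder n (X j) = ((n : ℚ) - ((j : ℕ) : ℚ)) • X (succF j) := by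
  classical
  rw [Δder, Derivation.sum_apply']
  by_cases hj : (j : ℕ) = n
  · rw [Finset.sum_eq_zero]
    · rw [hj]; simp
    · intro i _
      have : j ≠ i.castSucc := by
        intro h; apply_fun (Fin.val) at h; simp at h; have := i.isLt; omega
      simp [Derivation.smul_apply, pderiv_X_of_ne this]
  · have hlt : (j : ℕ) < n := by have := j.isLt; omega
    set i₀ : Fin n := ⟨(j : ℕ), hlt⟩ with hi₀
    have hcs : i₀.castSucc = j := by apply Fin.ext; simp [hi₀]
    rw [Finset.sum_eq_single i₀]
    · rw [Derivation.smul_apply, Derivation.smul_apply, hcs, pderiv_X_self]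
      have hcast : i₀.succ = succF j := by
        apply Fin.ext; simp [succF, hi₀]; omega
      rw [smul_eq_mul, mul_one, hcast]
    · intro i _ hne
      have : j ≠ i.castSucc := by
        intro h; apply hne; apply Fin.ext; apply_fun (Fin.val) at h; simp at h; show (i:ℕ) = (j:ℕ); omega
      simp [Derivation.smul_apply, pderiv_X_of_ne this]
    · intro h; exact absurd (Finset.mem_univ _) h

lemma Hder_X (n : ℕ) (j : Fin (n+1)) :
    Dder n (Δder n (X j)) - Δder n (Dder n (X j)) =
      ((n : ℚ) - 2 * ((j : ℕ) : ℚ)) • X j := by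
  rw [Dder_X, Δder_X, Derivation.map_smul, Derivation.map_smul, Δder_X, Dder_X,
    smul_smul, smul_smul]
  by_cases h0 : (j : ℕ) = 0
  · by_cases hn0 : n = 0
    · simp [succF, predF, h0, hn0]
    · have e1 : predF (succF j) = j := by
        apply Fin.ext; simp [predF, succF]; omega
      rw [e1, h0]
      push_cast
      rw [zero_mul, zero_smul, sub_zero]
      congr 1
      simp only [succF_val, h0, zero_add, Nat.min_eq_left (by omega : 1 ≤ n)]
      push_cast
      ring
  · by_cases hn : (j : ℕ) = n
    · have e2 : succF (predF j) = j := by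
        apply Fin.ext; simp [predF, succF]; omega
      have hc : ((j : ℕ) : ℚ) = (n : ℚ) := by rw [hn]
      rw [e2, hc, sub_self, zero_mul, zero_smul, zero_sub, ← neg_smul]
      congr 1
      simp only [predF_val]
      rw [Nat.cast_sub (by omega : 1 ≤ (j:ℕ)), hc]
      ring
    · have e1 : predF (succF j) = j := by
        apply Fin.ext; simp [predF, succF]; have := j.isLt; omega
      have e2 : succF (predF j) = j := by
        apply Fin.ext; simp [predF, succF]; have := j.isLt; omega
      rw [e1, e2, ← sub_smul]
      congr 1
      simp only [succF_val, predF_val]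
      have hlt : (j:ℕ) < n := by have := j.isLt; omega
      rw [Nat.min_eq_left (by omega), Nat.cast_sub (by omega : 1 ≤ (j:ℕ))]
      push_cast
      ring

lemma derivation_eigen {n : ℕ}
    (D : Derivation ℚ (MvPolynomial (Fin (n+1)) ℚ) (MvPolynomial (Fin (n+1)) ℚ))
    (c : Fin (n+1) → ℚ) (hD : ∀ j, D (X j) = c j • X j) (ν : Fin (n+1) →₀ ℕ) :
    D (monomial ν (1 : ℚ)) = (∑ j : Fin (n+1), (ν j : ℚ) * c j) • monomial ν 1 := by
  induction ν using Finsupp.induction with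
  | zero => simp [monomial_zero']
  | single_add a b f hf hb ih =>
    have hpow : ∀ b : ℕ, D (X a ^ b) = ((b : ℚ) * c a) • X a ^ b := by
      intro b
      induction b with
      | zero => simp
      | succ b ih2 =>
        rw [pow_succ, Derivation.leibniz, ih2, hD]
        simp only [smul_eq_mul, smul_eq_C_mul]
        push_cast
        rw [add_mul, map_add, one_mul]
        ring
    have hsum : (∑ j : Fin (n+1), (((Finsupp.single a b + f) j : ℕ) : ℚ) * c j)
        = (b : ℚ) * c a + ∑ j : Fin (n+1), ((f j : ℕ) : ℚ) * c j := by
      simp only [Finsupp.add_apply, Finsupp.single_apply, Nat.cast_add, add_mul,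
        Finset.sum_add_distrib]
      congr 1
      simp [apply_ite (Nat.cast (R := ℚ)), ite_mul]
    rw [monomial_single_add, Derivation.leibniz, ih, hpow, hsum, add_smul]
    simp only [smul_eq_mul, smul_eq_C_mul]
    ring

lemma Hder_mono (n : ℕ) (ν : Fin (n+1) →₀ ℕ) :
    Dder n (Δder n (monomial ν (1:ℚ))) - Δder n (Dder n (monomial ν 1)) =
      (∑ j : Fin (n+1), (ν j : ℚ) * ((n : ℚ) - 2 * ((j : ℕ) : ℚ))) • monomial ν 1 := by
  have : ∀ j, (⁅Dder n, Δder n⁆ : Derivation ℚ _ _) (X j)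
      = ((n : ℚ) - 2 * ((j : ℕ) : ℚ)) • X j := by
    intro j
    rw [Derivation.commutator_apply, Hder_X]
  have h := derivation_eigen (⁅Dder n, Δder n⁆) _ this ν
  rwa [Derivation.commutator_apply] at h

lemma scalar_eval {n k m : ℕ} (ν : Fin (n+1) →₀ ℕ)
    (hd : ∑ i : Fin (n+1), ν i = k) (hw : ∑ i : Fin (n+1), (i : ℕ) * ν i = m) :
    ∑ j : Fin (n+1), (ν j : ℚ) * ((n : ℚ) - 2 * ((j : ℕ) : ℚ)) = (n : ℚ) * k - 2 * m := by
  have h1 : ((∑ i : Fin (n+1), ν i : ℕ) : ℚ) = k := by rw [hd]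
  have h2 : ((∑ i : Fin (n+1), (i : ℕ) * ν i : ℕ) : ℚ) = m := by rw [hw]
  push_cast at h1 h2
  calc ∑ j : Fin (n+1), (ν j : ℚ) * ((n : ℚ) - 2 * ((j : ℕ) : ℚ))
      = ∑ j : Fin (n+1), ((n : ℚ) * (ν j : ℚ) - 2 * (((j : ℕ) : ℚ) * (ν j : ℚ))) := by
        apply Finset.sum_congr rfl; intros; ring
    _ = (n : ℚ) * (∑ j : Fin (n+1), (ν j : ℚ))
        - 2 * ∑ j : Fin (n+1), ((j : ℕ) : ℚ) * (ν j : ℚ) := by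
        rw [Finset.sum_sub_distrib, Finset.mul_sum, Finset.mul_sum]
    _ = (n : ℚ) * k - 2 * m := by rw [h1, h2]

lemma Dder_apply (n : ℕ) (p : MvPolynomial (Fin (n+1)) ℚ) : Dop n p = Dder n p := by
  simp [Dop, Dder, Derivation.sum_apply', LinearMap.sum_apply, Derivation.smul_apply,
    smul_eq_mul]

lemma Δder_apply (n : ℕ) (p : MvPolynomial (Fin (n+1)) ℚ) : Δop n p = Δder n p := by
  simp [Δop, Δder, Derivation.sum_apply', LinearMap.sum_apply, Derivation.smul_apply,
    smul_eq_mul]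

/-- key bookkeeping: sums against `ν - eₐ + e_b`. -/
lemma sum_shift {n : ℕ} (ν : Fin (n+1) →₀ ℕ) (a b : Fin (n+1)) (hab : a ≠ b)
    (ha : 1 ≤ ν a) (g : Fin (n+1) → ℕ) :
    (∑ j : Fin (n+1), g j * ((ν - Finsupp.single a 1 + Finsupp.single b 1 : Fin (n+1) →₀ ℕ) j)) + g a
      = (∑ j : Fin (n+1), g j * ν j) + g b := by
  classical
  obtain ⟨t, ht⟩ : ∃ t, ν a = t + 1 := ⟨ν a - 1, by omega⟩
  have hpt : ∀ j : Fin (n+1),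
      g j * ((ν - Finsupp.single a 1 + Finsupp.single b 1 : Fin (n+1) →₀ ℕ) j)
        + g j * ((Finsupp.single a 1 : Fin (n+1) →₀ ℕ) j)
      = g j * ν j + g j * ((Finsupp.single b 1 : Fin (n+1) →₀ ℕ) j) := by
    intro j
    simp only [Finsupp.add_apply, Finsupp.tsub_apply, Finsupp.single_apply]
    by_cases h1 : a = j
    · subst h1
      rw [if_pos rfl, if_neg (by exact fun h => hab (h.symm ▸ rfl))]
      rw [ht, Nat.add_sub_cancel]
      ring
    · rw [if_neg h1]
      by_cases h2 : b = j
      · rw [if_pos h2]; simp only [Nat.sub_zero, add_zero, mul_zero, mul_one]; ring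
      · rw [if_neg h2]; simp only [Nat.sub_zero, add_zero, mul_zero, mul_one]
  have hs := Finset.sum_congr rfl
    (fun j (_ : j ∈ (Finset.univ : Finset (Fin (n+1)))) => hpt j)
  rw [Finset.sum_add_distrib, Finset.sum_add_distrib] at hs
  have hsa : ∀ x : Fin (n+1), (∑ j : Fin (n+1),
      g j * ((Finsupp.single x 1 : Fin (n+1) →₀ ℕ) j)) = g x := by
    intro x
    simp [Finsupp.single_apply, mul_ite, Finset.sum_ite_eq]
  rw [hsa, hsa] at hs
  exact hs

lemma Δop_monomial_mem {n k m : ℕ} (ν : Fin (n+1) →₀ ℕ)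
    (hd : (∑ i : Fin (n+1), ν i) = k) (hw : (∑ i : Fin (n+1), (i : ℕ) * ν i) = m) :
    Δop n (monomial ν (1:ℚ)) ∈ Qspace n k (m+1) := by
  rw [Δop]
  rw [LinearMap.sum_apply]
  apply Submodule.sum_mem
  intro i _
  rw [LinearMap.smul_apply, LinearMap.comp_apply, LinearMap.mulLeft_apply,
    Derivation.coeFn_coe, pderiv_monomial]
  by_cases hz : ν i.castSucc = 0
  · rw [hz]
    norm_num
  · set μ : Fin (n+1) →₀ ℕ := ν - Finsupp.single i.castSucc 1 + Finsupp.single i.succ 1 with hμ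
    have hab : i.castSucc ≠ i.succ := by
      intro h; apply_fun (Fin.val) at h; simp at h
    have h1 : 1 ≤ ν i.castSucc := by omega
    have hdeg : (∑ j : Fin (n+1), μ j) = k := by
      have := sum_shift ν i.castSucc i.succ hab h1 (fun _ => 1)
      simp only [one_mul] at this
      rw [← hμ] at this
      rw [hd] at this
      omega
    have hwt : (∑ j : Fin (n+1), (j : ℕ) * μ j) = m + 1 := by
      have := sum_shift ν i.castSucc i.succ hab h1 (fun j => (j : ℕ))
      simp only [Fin.coe_castSucc, Fin.val_succ] at this
      rw [← hμ] at this
      rw [hw] at this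
      omega
    have hX : (X i.succ : MvPolynomial (Fin (n+1)) ℚ) *
        monomial (ν - Finsupp.single i.castSucc 1) ((1:ℚ) * ↑(ν i.castSucc))
        = (↑(ν i.castSucc) : ℚ) • monomial μ 1 := by
      rw [X, monomial_mul, smul_monomial, hμ]
      rw [add_comm (ν - Finsupp.single i.castSucc 1) (Finsupp.single i.succ 1)]
      norm_num
    rw [hX]
    apply Submodule.smul_mem
    apply Submodule.smul_mem
    exact Submodule.subset_span ⟨μ, hdeg, hwt, rfl⟩

lemma Dop_monomial_mem {n k m : ℕ} (ν : Fin (n+1) →₀ ℕ)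
    (hd : (∑ i : Fin (n+1), ν i) = k) (hw : (∑ i : Fin (n+1), (i : ℕ) * ν i) = m) :
    Dop n (monomial ν (1:ℚ)) ∈ Qspace n k (m-1) := by
  rw [Dop]
  rw [LinearMap.sum_apply]
  apply Submodule.sum_mem
  intro i _
  rw [LinearMap.smul_apply, LinearMap.comp_apply, LinearMap.mulLeft_apply,
    Derivation.coeFn_coe, pderiv_monomial]
  by_cases hz : ν i.succ = 0
  · rw [hz]
    norm_num
  · set μ : Fin (n+1) →₀ ℕ := ν - Finsupp.single i.succ 1 + Finsupp.single i.castSucc 1 with hμ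
    have hab : i.succ ≠ i.castSucc := by
      intro h; apply_fun (Fin.val) at h; simp at h
    have h1 : 1 ≤ ν i.succ := by omega
    have hdeg : (∑ j : Fin (n+1), μ j) = k := by
      have := sum_shift ν i.succ i.castSucc hab h1 (fun _ => 1)
      simp only [one_mul] at this
      rw [← hμ] at this
      rw [hd] at this
      omega
    have hwt : (∑ j : Fin (n+1), (j : ℕ) * μ j) = m - 1 := by
      have := sum_shift ν i.succ i.castSucc hab h1 (fun j => (j : ℕ))
      simp only [Fin.coe_castSucc, Fin.val_succ] at this
      rw [← hμ] at this
      rw [hw] at this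
      omega
    have hX : (X i.castSucc : MvPolynomial (Fin (n+1)) ℚ) *
        monomial (ν - Finsupp.single i.succ 1) ((1:ℚ) * ↑(ν i.succ))
        = (↑(ν i.succ) : ℚ) • monomial μ 1 := by
      rw [X, monomial_mul, smul_monomial, hμ]
      rw [add_comm (ν - Finsupp.single i.succ 1) (Finsupp.single i.castSucc 1)]
      norm_num
    rw [hX]
    apply Submodule.smul_mem
    apply Submodule.smul_mem
    exact Submodule.subset_span ⟨μ, hdeg, hwt, rfl⟩

lemma Δop_mem {n k m : ℕ} {v : MvPolynomial (Fin (n+1)) ℚ} (hv : v ∈ Qspace n k m) :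
    Δop n v ∈ Qspace n k (m+1) := by
  induction hv using Submodule.span_induction with
  | mem x hx =>
    obtain ⟨ν, hd, hw, rfl⟩ := hx
    exact Δop_monomial_mem ν hd hw
  | zero => simp only [map_zero]; exact Submodule.zero_mem _
  | add x y hx hy ihx ihy => rw [map_add]; exact Submodule.add_mem _ ihx ihy
  | smul a x hx ih => rw [map_smul]; exact Submodule.smul_mem _ _ ih

lemma Dop_mem {n k m : ℕ} {v : MvPolynomial (Fin (n+1)) ℚ} (hv : v ∈ Qspace n k m) :
    Dop n v ∈ Qspace n k (m-1) := by
  induction hv using Submodule.span_induction with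
  | mem x hx =>
    obtain ⟨ν, hd, hw, rfl⟩ := hx
    exact Dop_monomial_mem ν hd hw
  | zero => simp only [map_zero]; exact Submodule.zero_mem _
  | add x y hx hy ihx ihy => rw [map_add]; exact Submodule.add_mem _ ihx ihy
  | smul a x hx ih => rw [map_smul]; exact Submodule.smul_mem _ _ ih

lemma Dop_zero {n k : ℕ} {v : MvPolynomial (Fin (n+1)) ℚ} (hv : v ∈ Qspace n k 0) :
    Dop n v = 0 := by
  induction hv using Submodule.span_induction with
  | mem x hx =>
    obtain ⟨ν, hd, hw, rfl⟩ := hx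
    rw [Dop, LinearMap.sum_apply]
    apply Finset.sum_eq_zero
    intro i _
    rw [LinearMap.smul_apply, LinearMap.comp_apply, Derivation.coeFn_coe, pderiv_monomial]
    have hz : ν i.succ = 0 := by
      have := (Finset.sum_eq_zero_iff).mp hw i.succ (Finset.mem_univ _)
      simp only [Fin.val_succ] at this
      rcases Nat.mul_eq_zero.mp this with h | h
      · omega
      · exact h
    rw [hz]
    norm_num
  | zero => simp
  | add x y hx hy ihx ihy => rw [map_add, ihx, ihy, add_zero]
  | smul a x hx ih => rw [map_smul, ih, smul_zero]

lemma Hq {n k m : ℕ} {v : MvPolynomial (Fin (n+1)) ℚ} (hv : v ∈ Qspace n k m) :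
    Dop n (Δop n v) - Δop n (Dop n v) = ((n : ℚ) * k - 2 * m) • v := by
  induction hv using Submodule.span_induction with
  | mem x hx =>
    obtain ⟨ν, hd, hw, rfl⟩ := hx
    rw [Δder_apply n ((monomial ν) 1), Dder_apply n ((monomial ν) 1),
      Dder_apply n (Δder n ((monomial ν) 1)), Δder_apply n (Dder n ((monomial ν) 1)),
      Hder_mono, scalar_eval ν hd hw]
  | zero => simp
  | add x y hx hy ihx ihy => simp only [map_add]; rw [smul_add, ← ihx, ← ihy]; abel
  | smul a x hx ih =>
    simp only [map_smul]
    rw [← smul_sub, ih]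
    exact smul_comm _ _ _

set_option synthInstance.maxHeartbeats 1000000 in
lemma delta_inj {n k j : ℕ} (hj : 2 * j < n * k) :
    ∀ v ∈ Qspace n k j, Δop n v = 0 → v = 0 := by
  intro v hv hΔ
  set u : ℕ → MvPolynomial (Fin (n+1)) ℚ := fun i => ((Dop n) ^ i) v with hu
  have hu0 : u 0 = v := rfl
  have husucc : ∀ i, u (i+1) = Dop n (u i) := by
    intro i
    rw [hu]
    simp only [pow_succ']
    rfl
  have hmem : ∀ i, u i ∈ Qspace n k (j - i) := by
    intro i
    induction i with
    | zero => simpa [hu0] using hv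
    | succ i ih =>
      rw [husucc]
      have := Dop_mem ih
      rw [Nat.sub_sub] at this
      exact this
  have hq : (1:ℚ) ≤ (n:ℚ) * k - 2 * j := by
    have h1 : (2*j+1 : ℕ) ≤ n*k := hj
    have h2 := (Nat.cast_le (α := ℚ)).mpr h1
    push_cast at h2
    linarith
  have hstring : ∀ i, i ≤ j → Δop n (u (i+1)) =
      (-(((i:ℚ)+1) * ((n:ℚ)*(k:ℚ) - 2*(j:ℚ) + (i:ℚ)))) • u i := by
    intro i
    induction i with
    | zero =>
      intro _
      rw [husucc, hu0]
      have h := Hq (m := j) hv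
      rw [hΔ, map_zero, zero_sub, neg_eq_iff_eq_neg] at h
      rw [h, ← neg_smul]
      congr 1
      push_cast
      ring
    | succ i ih =>
      intro hle
      have hi : i ≤ j := le_trans (Nat.le_succ i) hle
      have ihh := ih hi
      rw [husucc (i+1)]
      have hcomm := Hq (m := j - (i+1)) (hmem (i+1))
      have hD : Dop n (Δop n (u (i+1))) =
          (-(((i:ℚ)+1) * ((n:ℚ)*(k:ℚ) - 2*(j:ℚ) + (i:ℚ)))) • u (i+1) := by
        rw [ihh, map_smul, ← husucc]
      rw [hD] at hcomm
      have hkey : Δop n (Dop n (u (i+1))) =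
          ((-(((i:ℚ)+1) * ((n:ℚ)*(k:ℚ) - 2*(j:ℚ) + (i:ℚ))))
            - ((n:ℚ) * (k:ℚ) - 2 * ((j - (i+1) : ℕ) : ℚ))) • u (i+1) := by
        rw [sub_smul, ← hcomm]
        abel
      rw [hkey]
      congr 1
      have hcast : ((j - (i+1) : ℕ) : ℚ) = (j:ℚ) - (i:ℚ) - 1 := by
        rw [Nat.cast_sub hle]
        push_cast
        ring
      rw [hcast]
      push_cast
      ring
  have hzero : u (j+1) = 0 := by
    rw [husucc]
    apply Dop_zero (k := k)
    have := hmem j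
    rw [Nat.sub_self] at this
    exact this
  have hdown : ∀ t, t ≤ j+1 → u (j+1-t) = 0 := by
    intro t
    induction t with
    | zero => intro _; simpa using hzero
    | succ t ih =>
      intro ht
      have h1 : u (j+1-t) = 0 := ih (by omega)
      have h2 := hstring (j - t) (Nat.sub_le _ _)
      rw [show j - t + 1 = j + 1 - t from by omega, h1, map_zero] at h2
      have hr : (-((((j-t : ℕ):ℚ))+1) * ((n:ℚ)*(k:ℚ) - 2*(j:ℚ) + ((j-t:ℕ):ℚ))) ≠ 0 := by
        have hc : (0:ℚ) ≤ ((j-t:ℕ):ℚ) := Nat.cast_nonneg _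
        have h3 : ((((j-t : ℕ):ℚ))+1) > 0 := by linarith
        have h4 : ((n:ℚ)*(k:ℚ) - 2*(j:ℚ) + ((j-t:ℕ):ℚ)) > 0 := by linarith
        intro hcon
        rcases mul_eq_zero.mp hcon with h | h
        · rw [neg_eq_zero] at h; linarith
        · linarith
      rw [show j + 1 - (t+1) = j - t from by omega]
      have h5 := h2.symm
      rcases smul_eq_zero.mp h5 with h | h
      · exact absurd (by rw [neg_mul]; exact h) hr
      · exact h
  have := hdown (j+1) le_rfl
  rw [Nat.sub_self] at this
  rw [← hu0]
  exact this

def Sset (n k m : ℕ) : Set (Fin (n+1) →₀ ℕ) :=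
  {ν | (∑ i : Fin (n+1), ν i) = k ∧ (∑ i : Fin (n+1), (i : ℕ) * ν i) = m}

lemma Qspace_eq (n k m : ℕ) :
    Qspace n k m = Submodule.span ℚ ((fun ν => monomial ν (1:ℚ)) '' Sset n k m) := by
  unfold Qspace
  congr 1
  ext p
  constructor
  · rintro ⟨ν, h1, h2, rfl⟩; exact ⟨ν, ⟨h1, h2⟩, rfl⟩
  · rintro ⟨ν, ⟨h1, h2⟩, rfl⟩; exact ⟨ν, h1, h2, rfl⟩

lemma Sset_finite (n k m : ℕ) : (Sset n k m).Finite := by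
  have hb : ∀ ν : Sset n k m, ∀ i, ν.1 i ≤ k := by
    rintro ⟨ν, hν1, _⟩ i
    calc ν i ≤ ∑ j : Fin (n+1), ν j :=
          Finset.single_le_sum (f := fun j => ν j) (fun _ _ => Nat.zero_le _) (Finset.mem_univ i)
      _ = k := hν1
  rw [← Set.finite_coe_iff]
  apply Finite.of_injective (f := fun (ν : Sset n k m) (i : Fin (n+1)) =>
    (⟨ν.1 i, Nat.lt_succ_of_le (hb ν i)⟩ : Fin (k+1)))
  intro ν μ h
  apply Subtype.ext
  apply Finsupp.ext
  intro i
  have := congrFun h i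
  simpa using congrArg Fin.val this

lemma finrank_Qspace (n k m : ℕ) :
    Module.finrank ℚ (Qspace n k m) = Nat.card (Sset n k m) := by
  haveI : Finite (Sset n k m) := Set.finite_coe_iff.mpr (Sset_finite n k m)
  haveI := Fintype.ofFinite (Sset n k m)
  have hb : LinearIndependent ℚ (fun (ν : Sset n k m) => monomial ν.1 (1:ℚ)) := by
    have h := (basisMonomials (Fin (n+1)) ℚ).linearIndependent
    have := h.comp (Subtype.val : Sset n k m → (Fin (n+1) →₀ ℕ)) Subtype.val_injective
    exact this
  have hr : Set.range (fun (ν : Sset n k m) => monomial ν.1 (1:ℚ))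
      = (fun ν => monomial ν (1:ℚ)) '' Sset n k m := by
    rw [show (fun (ν : Sset n k m) => monomial ν.1 (1:ℚ))
        = (fun ν => monomial ν (1:ℚ)) ∘ (Subtype.val) from rfl, Set.range_comp,
      Subtype.range_coe]
  rw [Qspace_eq, ← hr, finrank_span_eq_card hb, Nat.card_eq_fintype_card]

lemma card_le_card (n k m : ℕ) (hm : 1 ≤ m) (h : 2 * m ≤ n * k) :
    Nat.card (Sset n k (m-1)) ≤ Nat.card (Sset n k m) := by
  haveI : Module.Finite ℚ (Qspace n k m) := by
    rw [Qspace_eq]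
    exact Module.Finite.span_of_finite ℚ ((Sset_finite n k m).image _)
  rw [← finrank_Qspace, ← finrank_Qspace]
  have hmaps : ∀ x ∈ Qspace n k (m-1), Δop n x ∈ Qspace n k m := by
    intro x hx
    have := Δop_mem hx
    rwa [show m - 1 + 1 = m from by omega] at this
  apply LinearMap.finrank_le_finrank_of_injective
    (f := (Δop n).restrict hmaps)
  rw [← LinearMap.ker_eq_bot]
  apply (Submodule.eq_bot_iff _).mpr
  intro x hx
  have hx0 : Δop n (x : MvPolynomial (Fin (n+1)) ℚ) = 0 := by
    have := congrArg (Subtype.val) hx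
    simpa [LinearMap.restrict_apply] using this
  have hj : 2 * (m-1) < n * k := by omega
  have := delta_inj hj x.1 x.2 hx0
  exact Subtype.ext this

section Counting
open Finset Multiset

/-- reindex a sum over nonzero `Fin (n+1)` as a sum over `(range (n+1)).erase 0`. -/
lemma sum_fin_erase {M : Type*} [AddCommMonoid M] (n : ℕ) (f : ℕ → M) :
    ∑ i ∈ (Finset.univ.erase (0 : Fin (n+1))), f (i : ℕ)
      = ∑ a ∈ (Finset.range (n+1)).erase 0, f a := by
  apply Finset.sum_bij (fun (i : Fin (n+1)) _ => (i : ℕ))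
  · intro i hi
    rw [Finset.mem_erase] at hi ⊢
    refine ⟨?_, Finset.mem_range.mpr i.isLt⟩
    intro h
    exact hi.1 (by apply Fin.ext; simp [h])
  · intro i _ j _ h
    exact Fin.ext h
  · intro a ha
    rw [Finset.mem_erase, Finset.mem_range] at ha
    exact ⟨⟨a, ha.2⟩, Finset.mem_erase.mpr ⟨by simp [Fin.ext_iff, ha.1], Finset.mem_univ _⟩, rfl⟩
  · intros; rfl

lemma count_card {n : ℕ} (s : Multiset ℕ) (hpos : ∀ x ∈ s, 0 < x) (hle : ∀ x ∈ s, x ≤ n) :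
    ∑ a ∈ (Finset.range (n+1)).erase 0, s.count a = Multiset.card s := by
  rw [← Multiset.toFinset_sum_count_eq s]
  apply (Finset.sum_subset ?_ ?_).symm
  · intro a ha
    rw [Multiset.mem_toFinset] at ha
    rw [Finset.mem_erase, Finset.mem_range]
    exact ⟨by have := hpos a ha; omega, by have := hle a ha; omega⟩
  · intro a _ ha
    rw [Multiset.mem_toFinset] at ha
    exact Multiset.count_eq_zero.mpr ha

lemma count_sum {n : ℕ} (s : Multiset ℕ) (hpos : ∀ x ∈ s, 0 < x) (hle : ∀ x ∈ s, x ≤ n) :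
    ∑ a ∈ (Finset.range (n+1)).erase 0, a * s.count a = s.sum := by
  have h := Finset.sum_multiset_map_count s (id : ℕ → ℕ)
  rw [Multiset.map_id] at h
  have h2 : s.sum = ∑ a ∈ s.toFinset, a * s.count a := by
    rw [h]
    apply Finset.sum_congr rfl
    intro x _
    simp [mul_comm]
  rw [h2]
  apply (Finset.sum_subset ?_ ?_).symm
  · intro a ha
    rw [Multiset.mem_toFinset] at ha
    rw [Finset.mem_erase, Finset.mem_range]
    exact ⟨by have := hpos a ha; omega, by have := hle a ha; omega⟩
  · intro a _ ha
    rw [Multiset.mem_toFinset] at ha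
    rw [Multiset.count_eq_zero.mpr ha, mul_zero]

lemma finset_card_sum {ι : Type*} (s : Finset ι) (f : ι → Multiset ℕ) :
    Multiset.card (∑ i ∈ s, f i) = ∑ i ∈ s, Multiset.card (f i) := by
  classical
  induction s using Finset.induction with
  | empty => simp
  | insert _ _ h ih => rw [Finset.sum_insert h, Finset.sum_insert h, Multiset.card_add, ih]

lemma finset_sum_sum {ι : Type*} (s : Finset ι) (f : ι → Multiset ℕ) :
    (∑ i ∈ s, f i).sum = ∑ i ∈ s, (f i).sum := by
  classical
  induction s using Finset.induction with
  | empty => simp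
  | insert _ _ h ih => rw [Finset.sum_insert h, Finset.sum_insert h, Multiset.sum_add, ih]

/-- the multiset associated to an exponent vector -/
def Tmul (n : ℕ) (ν : Fin (n+1) →₀ ℕ) : Multiset ℕ :=
  ∑ i ∈ (Finset.univ.erase (0 : Fin (n+1))), Multiset.replicate (ν i) (i : ℕ)

lemma Tmul_card (n : ℕ) (ν : Fin (n+1) →₀ ℕ) :
    Multiset.card (Tmul n ν) = ∑ i ∈ (Finset.univ.erase (0 : Fin (n+1))), ν i := by
  rw [Tmul, finset_card_sum]
  simp

lemma Tmul_sum (n : ℕ) (ν : Fin (n+1) →₀ ℕ) :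
    (Tmul n ν).sum = ∑ i ∈ (Finset.univ.erase (0 : Fin (n+1))), (i : ℕ) * ν i := by
  rw [Tmul, finset_sum_sum]
  apply Finset.sum_congr rfl
  intro i _
  rw [Multiset.sum_replicate, smul_eq_mul, mul_comm]

lemma Tmul_count (n : ℕ) (ν : Fin (n+1) →₀ ℕ) (j : Fin (n+1)) (hj : j ≠ 0) :
    (Tmul n ν).count (j : ℕ) = ν j := by
  rw [Tmul, Multiset.count_sum']
  rw [Finset.sum_eq_single j]
  · rw [Multiset.count_replicate, if_pos rfl]
  · intro i hi hne
    rw [Multiset.count_replicate, if_neg]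
    intro h
    exact hne (Fin.ext h)
  · intro h
    exact absurd (Finset.mem_erase.mpr ⟨hj, Finset.mem_univ _⟩) h

end Counting

noncomputable def toν (n k m : ℕ) (P : Nat.Partition m) : Fin (n+1) →₀ ℕ :=
  Finsupp.equivFunOnFinite.symm
    (fun i : Fin (n+1) => if (i : ℕ) = 0 then k - Multiset.card P.parts
      else P.parts.count (i : ℕ))

lemma toν_apply (n k m : ℕ) (P : Nat.Partition m) (i : Fin (n+1)) :
    toν n k m P i = if (i : ℕ) = 0 then k - Multiset.card P.parts
      else P.parts.count (i : ℕ) := rfl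

lemma erase_congr_count (n k m : ℕ) (P : Nat.Partition m) (g : ℕ → ℕ) :
    ∑ i ∈ Finset.univ.erase (0 : Fin (n+1)), g (i : ℕ) * toν n k m P i
      = ∑ i ∈ Finset.univ.erase (0 : Fin (n+1)), g (i : ℕ) * P.parts.count (i : ℕ) := by
  apply Finset.sum_congr rfl
  intro i hi
  rw [toν_apply, if_neg]
  intro h
  exact (Finset.mem_erase.mp hi).1 (by apply Fin.ext; simpa using h)

lemma toν_mem (n k m : ℕ) (P : Nat.Partition m)
    (hk : Multiset.card P.parts ≤ k) (hn : ∀ x ∈ P.parts, x ≤ n) :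
    toν n k m P ∈ Sset n k m := by
  have hcnt : ∑ i ∈ Finset.univ.erase (0 : Fin (n+1)), P.parts.count (i : ℕ)
      = Multiset.card P.parts := by
    rw [sum_fin_erase n (fun a => P.parts.count a)]
    exact count_card P.parts (fun x hx => P.parts_pos hx) hn
  constructor
  · rw [← Finset.add_sum_erase _ _ (Finset.mem_univ (0 : Fin (n+1)))]
    have h0 : toν n k m P 0 = k - Multiset.card P.parts := by
      simp [toν_apply]
    have h1 : ∑ i ∈ Finset.univ.erase (0 : Fin (n+1)), toν n k m P i
        = Multiset.card P.parts := by
      rw [← hcnt]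
      have := erase_congr_count n k m P (fun _ => 1)
      simpa using this
    rw [h0, h1]
    omega
  · rw [← Finset.add_sum_erase _ _ (Finset.mem_univ (0 : Fin (n+1)))]
    rw [show ((0 : Fin (n+1)) : ℕ) = 0 from rfl, zero_mul, zero_add]
    rw [erase_congr_count n k m P (fun a => a)]
    rw [sum_fin_erase n (fun a => a * P.parts.count a)]
    rw [count_sum P.parts (fun x hx => P.parts_pos hx) hn]
    exact P.parts_sum

def fromν (n m : ℕ) (ν : Fin (n+1) →₀ ℕ) (hw : ∑ i : Fin (n+1), (i : ℕ) * ν i = m) :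
    Nat.Partition m where
  parts := Tmul n ν
  parts_pos := by
    intro x hx
    rw [Tmul, Multiset.mem_sum] at hx
    obtain ⟨i, hi, hxi⟩ := hx
    have := Multiset.eq_of_mem_replicate hxi
    subst this
    have : i ≠ 0 := (Finset.mem_erase.mp hi).1
    have : (i : ℕ) ≠ 0 := fun h => this (by apply Fin.ext; simpa using h)
    omega
  parts_sum := by
    rw [Tmul_sum, ← hw]
    rw [← Finset.add_sum_erase _ (fun i : Fin (n+1) => (i : ℕ) * ν i)
      (Finset.mem_univ (0 : Fin (n+1)))]
    rw [show ((0 : Fin (n+1)) : ℕ) = 0 from rfl, zero_mul, zero_add]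

lemma fromν_card_le (n k m : ℕ) (ν : Fin (n+1) →₀ ℕ)
    (hd : ∑ i : Fin (n+1), ν i = k) (hw : ∑ i : Fin (n+1), (i : ℕ) * ν i = m) :
    Multiset.card (fromν n m ν hw).parts ≤ k := by
  show Multiset.card (Tmul n ν) ≤ k
  rw [Tmul_card, ← hd]
  exact Finset.sum_le_sum_of_subset (Finset.erase_subset _ _)

lemma fromν_parts_le (n m : ℕ) (ν : Fin (n+1) →₀ ℕ)
    (hw : ∑ i : Fin (n+1), (i : ℕ) * ν i = m) :
    ∀ x ∈ (fromν n m ν hw).parts, x ≤ n := by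
  intro x hx
  rw [show (fromν n m ν hw).parts = Tmul n ν from rfl, Tmul, Multiset.mem_sum] at hx
  obtain ⟨i, _, hxi⟩ := hx
  have := Multiset.eq_of_mem_replicate hxi
  subst this
  have := i.isLt
  omega

noncomputable def partEquiv (n k m : ℕ) :
    {P : Nat.Partition m // Multiset.card P.parts ≤ k ∧ ∀ x ∈ P.parts, x ≤ n}
      ≃ Sset n k m where
  toFun P := ⟨toν n k m P.1, toν_mem n k m P.1 P.2.1 P.2.2⟩
  invFun ν := ⟨fromν n m ν.1 ν.2.2, fromν_card_le n k m ν.1 ν.2.1 ν.2.2,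
    fromν_parts_le n m ν.1 ν.2.2⟩
  left_inv := by
    rintro ⟨P, hk, hn⟩
    apply Subtype.ext
    apply Nat.Partition.ext
    show Tmul n (toν n k m P) = P.parts
    rw [Tmul]
    have h1 : ∀ i ∈ Finset.univ.erase (0 : Fin (n+1)),
        Multiset.replicate (toν n k m P i) (i : ℕ)
          = Multiset.replicate (P.parts.count (i : ℕ)) (i : ℕ) := by
      intro i hi
      congr 1
      rw [toν_apply, if_neg]
      intro h
      exact (Finset.mem_erase.mp hi).1 (by apply Fin.ext; simpa using h)
    rw [Finset.sum_congr rfl h1]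
    rw [sum_fin_erase n (fun a => Multiset.replicate (P.parts.count a) a)]
    have h2 : ∑ a ∈ (Finset.range (n+1)).erase 0, Multiset.replicate (P.parts.count a) a
        = ∑ a ∈ P.parts.toFinset, Multiset.replicate (P.parts.count a) a := by
      refine (Finset.sum_subset ?_ ?_).symm
      · intro a ha
        rw [Multiset.mem_toFinset] at ha
        rw [Finset.mem_erase, Finset.mem_range]
        have := P.parts_pos ha
        have := hn a ha
        exact ⟨by omega, by omega⟩
      · intro a _ ha
        rw [Multiset.mem_toFinset] at ha
        rw [Multiset.count_eq_zero.mpr ha]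
        simp
    rw [h2]
    calc ∑ a ∈ P.parts.toFinset, Multiset.replicate (P.parts.count a) a
        = ∑ a ∈ P.parts.toFinset, P.parts.count a • ({a} : Multiset ℕ) :=
          Finset.sum_congr rfl (fun a _ => (Multiset.nsmul_singleton a _).symm)
      _ = P.parts := Multiset.toFinset_sum_count_nsmul_eq P.parts
  right_inv := by
    rintro ⟨ν, hd, hw⟩
    apply Subtype.ext
    apply Finsupp.ext
    intro i
    show toν n k m (fromν n m ν hw) i = ν i
    by_cases h0 : (i : ℕ) = 0
    · rw [toν_apply, if_pos h0]
      show k - Multiset.card (Tmul n ν) = ν i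
      rw [Tmul_card]
      have hi0 : i = 0 := by apply Fin.ext; simpa using h0
      subst hi0
      have := Finset.add_sum_erase Finset.univ (ν : Fin (n+1) → ℕ)
        (Finset.mem_univ (0 : Fin (n+1)))
      rw [hd] at this
      omega
    · rw [toν_apply, if_neg h0]
      show (Tmul n ν).count (i : ℕ) = ν i
      exact Tmul_count n ν i (fun h => h0 (by rw [h]; rfl))

lemma pRect_eq (n k m : ℕ) : pRect k n m = Nat.card (Sset n k m) := by
  rw [← Nat.card_congr (partEquiv n k m)]
  rw [pRect, Nat.card_eq_fintype_card, Fintype.card_subtype]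


end AuxProof

/-- unimodality of the Gaussian coefficients. -/
theorem gaussian_unimodal (n k m : ℕ) (hm : 1 ≤ m) (h : 2 * m ≤ n * k) :
    pRect k n (m - 1) ≤ pRect k n m := by
  rw [pRect_eq, pRect_eq]
  exact card_le_card n k m hm h
end

section
/- Let n, k, m : ℕ with nk = 2m (so that at least one of n and k is even). If I ∈ Q_n(k,m) satisfies D(I) = 0, then also Δ(I) = 0; that is, every semi-invariant of a binary n-form of degree k and weight nk/2 is an invariant. -/
open MvPolynomial

section AuxSemi

open Finset

variable {n : ℕ}

private lemma my_pderiv_comm {σ : Type*} [DecidableEq σ] (i j : σ)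
    (p : MvPolynomial σ ℚ) : pderiv i (pderiv j p) = pderiv j (pderiv i p) := by
  induction p using MvPolynomial.induction_on' with
  | monomial s a =>
      simp only [pderiv_monomial]
      rcases eq_or_ne i j with rfl | hij
      · rfl
      · have hexp : s - Finsupp.single j 1 - Finsupp.single i 1
            = s - Finsupp.single i 1 - Finsupp.single j 1 := by
          ext x
          simp only [Finsupp.tsub_apply, Finsupp.single_apply]
          split_ifs <;> omega
        have hcoef : (a * ((s j : ℚ))) * (((s - Finsupp.single j 1 : σ →₀ ℕ) i : ℕ) : ℚ)
            = (a * ((s i : ℚ))) * (((s - Finsupp.single i 1 : σ →₀ ℕ) j : ℕ) : ℚ) := by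
          rw [Finsupp.tsub_apply, Finsupp.tsub_apply, Finsupp.single_apply,
            Finsupp.single_apply, if_neg hij.symm, if_neg hij]
          simp only [Nat.sub_zero]
          ring
        rw [hexp, hcoef]
  | add p q hp hq => simp [hp, hq]

private lemma Dop_apply (p : MvPolynomial (Fin (n+1)) ℚ) :
    Dop n p = ∑ i : Fin n, ((i : ℚ) + 1) • (X i.castSucc * pderiv i.succ p) := by
  simp [Dop, LinearMap.sum_apply, LinearMap.smul_apply, LinearMap.comp_apply,
    LinearMap.mulLeft_apply]

private lemma Δop_apply (p : MvPolynomial (Fin (n+1)) ℚ) :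
    Δop n p = ∑ i : Fin n, ((n : ℚ) - (i : ℚ)) • (X i.succ * pderiv i.castSucc p) := by
  simp [Δop, LinearMap.sum_apply, LinearMap.smul_apply, LinearMap.comp_apply,
    LinearMap.mulLeft_apply]

private lemma cross_term (i j : Fin n) (p : MvPolynomial (Fin (n+1)) ℚ) :
    X i.castSucc * pderiv i.succ (X j.succ * pderiv j.castSucc p)
      - X j.succ * pderiv j.castSucc (X i.castSucc * pderiv i.succ p)
    = if i = j then X i.castSucc * pderiv i.castSucc p - X i.succ * pderiv i.succ p
      else 0 := by
  rcases eq_or_ne i j with rfl | hij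
  · rw [if_pos rfl, pderiv_mul, pderiv_mul, pderiv_X_self, pderiv_X_self,
      my_pderiv_comm i.succ i.castSucc]
    ring
  · rw [if_neg hij, pderiv_mul, pderiv_mul,
      pderiv_X_of_ne (fun hh => hij (Fin.succ_injective _ hh).symm),
      pderiv_X_of_ne (fun hh => hij (Fin.castSucc_injective _ hh)),
      my_pderiv_comm i.succ j.castSucc]
    ring

private lemma comm_apply (p : MvPolynomial (Fin (n+1)) ℚ) :
    Dop n (Δop n p) - Δop n (Dop n p)
      = ∑ i : Fin n, (((i : ℚ) + 1) * ((n : ℚ) - (i : ℚ))) •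
          (X i.castSucc * pderiv i.castSucc p - X i.succ * pderiv i.succ p) := by
  have hDΔ : Dop n (Δop n p) = ∑ i : Fin n, ∑ j : Fin n,
      ((((i:ℚ)+1) * ((n:ℚ)-(j:ℚ)))) •
        (X i.castSucc * pderiv i.succ (X j.succ * pderiv j.castSucc p)) := by
    rw [Δop_apply, Dop_apply]
    refine Finset.sum_congr rfl fun i _ => ?_
    simp only [map_sum, map_smul, Derivation.map_smul, Finset.mul_sum, Finset.smul_sum, mul_smul_comm, smul_smul]
  have hΔD : Δop n (Dop n p) = ∑ i : Fin n, ∑ j : Fin n,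
      ((((i:ℚ)+1) * ((n:ℚ)-(j:ℚ)))) •
        (X j.succ * pderiv j.castSucc (X i.castSucc * pderiv i.succ p)) := by
    rw [Dop_apply, Δop_apply]
    have e1 : ∑ j : Fin n, ((n : ℚ) - (j : ℚ)) •
        (X j.succ * pderiv j.castSucc (∑ i : Fin n, ((i:ℚ)+1) • (X i.castSucc * pderiv i.succ p)))
        = ∑ j : Fin n, ∑ i : Fin n, ((((n:ℚ)-(j:ℚ)) * ((i:ℚ)+1))) •
            (X j.succ * pderiv j.castSucc (X i.castSucc * pderiv i.succ p)) := by
      refine Finset.sum_congr rfl fun j _ => ?_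
      simp only [map_sum, map_smul, Derivation.map_smul, Finset.mul_sum, Finset.smul_sum, mul_smul_comm, smul_smul]
    rw [e1, Finset.sum_comm]
    refine Finset.sum_congr rfl fun i _ => Finset.sum_congr rfl fun j _ => ?_
    rw [mul_comm]
  rw [hDΔ, hΔD, ← Finset.sum_sub_distrib]
  refine Finset.sum_congr rfl fun i _ => ?_
  rw [← Finset.sum_sub_distrib]
  have e2 : ∀ j : Fin n, ((((i:ℚ)+1) * ((n:ℚ)-(j:ℚ)))) •
        (X i.castSucc * pderiv i.succ (X j.succ * pderiv j.castSucc p))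
      - ((((i:ℚ)+1) * ((n:ℚ)-(j:ℚ)))) •
        (X j.succ * pderiv j.castSucc (X i.castSucc * pderiv i.succ p))
      = ((((i:ℚ)+1) * ((n:ℚ)-(j:ℚ)))) •
          (if i = j then X i.castSucc * pderiv i.castSucc p - X i.succ * pderiv i.succ p
            else 0) := by
    intro j
    rw [← smul_sub, cross_term]
  rw [Finset.sum_congr rfl fun j _ => e2 j]
  rw [Finset.sum_eq_single i (fun j _ hji => by rw [if_neg (Ne.symm hji), smul_zero])
    (fun hi => absurd (Finset.mem_univ i) hi), if_pos rfl]

private lemma euler_monomial (i : Fin (n+1)) (ν : Fin (n+1) →₀ ℕ) :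
    X i * pderiv i (monomial ν (1:ℚ)) = ((ν i : ℚ)) • monomial ν 1 := by
  rw [pderiv_monomial, one_mul]
  rcases Nat.eq_zero_or_pos (ν i) with h0 | hpos
  · simp [h0]
  · have hid : Finsupp.single i 1 + (ν - Finsupp.single i 1) = ν := by
      ext x
      simp only [Finsupp.add_apply, Finsupp.tsub_apply, Finsupp.single_apply]
      split_ifs with hix
      · subst hix; omega
      · omega
    rw [X, monomial_mul, hid, smul_monomial]
    simp

private lemma weighted_sum_add_single (c : Fin (n+1) → ℕ) (ν' : Fin (n+1) →₀ ℕ)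
    (a : Fin (n+1)) :
    ∑ j : Fin (n+1), c j * ((ν' + Finsupp.single a 1 : Fin (n+1) →₀ ℕ) j)
      = (∑ j : Fin (n+1), c j * ν' j) + c a := by
  simp only [Finsupp.add_apply, mul_add, Finset.sum_add_distrib]
  congr 1
  rw [Finset.sum_eq_single a]
  · simp
  · intro b _ hb
    simp [Finsupp.single_apply, if_neg (Ne.symm hb)]
  · intro ha
    exact absurd (Finset.mem_univ a) ha

private lemma comm_monomial (k w : ℕ) (ν : Fin (n+1) →₀ ℕ)
    (hk : (∑ i : Fin (n+1), ν i) = k) (hw : (∑ i : Fin (n+1), (i:ℕ) * ν i) = w) :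
    Dop n (Δop n (monomial ν (1:ℚ))) - Δop n (Dop n (monomial ν 1))
      = ((n:ℚ) * k - 2 * w) • monomial ν 1 := by
  rw [comm_apply]
  have e1 : ∀ i : Fin n, (((i : ℚ) + 1) * ((n : ℚ) - (i : ℚ))) •
      (X i.castSucc * pderiv i.castSucc (monomial ν (1:ℚ))
        - X i.succ * pderiv i.succ (monomial ν 1))
      = ((((i:ℚ)+1) * ((n:ℚ)-(i:ℚ))) * ((ν i.castSucc : ℚ) - (ν i.succ : ℚ)))
          • monomial ν 1 := by
    intro i
    rw [euler_monomial, euler_monomial, ← sub_smul, smul_smul]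
  rw [Finset.sum_congr rfl fun i _ => e1 i, ← Finset.sum_smul]
  congr 1
  have h1 : (∑ j : Fin (n+1), ((ν j : ℚ))) = (k:ℚ) := by exact_mod_cast hk
  have h2 : (∑ j : Fin (n+1), ((j:ℕ):ℚ) * ((ν j : ℚ))) = (w:ℚ) := by exact_mod_cast hw
  set F : Fin (n+1) → ℚ := fun j => ((j:ℚ)+1) * ((n:ℚ)-(j:ℚ)) * (ν j : ℚ) with hF
  set G : Fin (n+1) → ℚ := fun j => (j:ℚ) * ((n:ℚ)-(j:ℚ)+1) * (ν j : ℚ) with hG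
  have e3 : ∀ i : Fin n, (((i:ℚ)+1) * ((n:ℚ)-(i:ℚ))) * ((ν i.castSucc : ℚ) - (ν i.succ : ℚ))
      = F i.castSucc - G i.succ := by
    intro i
    simp only [hF, hG, Fin.coe_castSucc, Fin.val_succ]
    push_cast
    ring
  rw [Finset.sum_congr rfl fun i _ => e3 i, Finset.sum_sub_distrib]
  have hFsum : ∑ i : Fin n, F i.castSucc = ∑ j : Fin (n+1), F j := by
    rw [Fin.sum_univ_castSucc (f := F)]
    have : F (Fin.last n) = 0 := by simp [hF, Fin.val_last]
    rw [this, add_zero]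
  have hGsum : ∑ i : Fin n, G i.succ = ∑ j : Fin (n+1), G j := by
    rw [Fin.sum_univ_succ (f := G)]
    have : G 0 = 0 := by simp [hG]
    rw [this, zero_add]
  rw [hFsum, hGsum, ← Finset.sum_sub_distrib]
  have e4 : ∀ j : Fin (n+1), F j - G j
      = (n:ℚ) * (ν j : ℚ) - 2 * (((j:ℕ):ℚ) * (ν j : ℚ)) := by
    intro j
    simp only [hF, hG]
    ring
  rw [Finset.sum_congr rfl fun j _ => e4 j, Finset.sum_sub_distrib, ← Finset.mul_sum,
    ← Finset.mul_sum, h1, h2]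

private lemma comm_Q (k w : ℕ) {p : MvPolynomial (Fin (n+1)) ℚ} (hp : p ∈ Qspace n k w) :
    Dop n (Δop n p) - Δop n (Dop n p) = ((n:ℚ) * k - 2 * w) • p := by
  induction hp using Submodule.span_induction with
  | mem x hx =>
      obtain ⟨ν, hk, hw, rfl⟩ := hx
      exact comm_monomial k w ν hk hw
  | zero => simp
  | add x y _ _ hx hy =>
      rw [map_add, map_add, map_add, map_add, smul_add]
      rw [show Dop n (Δop n x) + Dop n (Δop n y) - (Δop n (Dop n x) + Δop n (Dop n y))
        = (Dop n (Δop n x) - Δop n (Dop n x)) + (Dop n (Δop n y) - Δop n (Dop n y)) by ring,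
        hx, hy]
  | smul a x _ hx =>
      rw [map_smul, map_smul, map_smul, map_smul, ← smul_sub, hx, smul_comm]

private lemma Δ_mem (k w : ℕ) {p : MvPolynomial (Fin (n+1)) ℚ} (hp : p ∈ Qspace n k w) :
    Δop n p ∈ Qspace n k (w+1) := by
  induction hp using Submodule.span_induction with
  | mem x hx =>
      obtain ⟨ν, hk, hw, rfl⟩ := hx
      rw [Δop_apply]
      refine Submodule.sum_mem _ fun i _ => Submodule.smul_mem _ _ ?_
      rcases Nat.eq_zero_or_pos (ν i.castSucc) with h0 | hpos
      · rw [pderiv_monomial, one_mul, h0]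
        simp
      · obtain ⟨ν', hν'⟩ : ∃ ν', ν = ν' + Finsupp.single i.castSucc 1 :=
          ⟨ν - Finsupp.single i.castSucc 1,
            (tsub_add_cancel_of_le (Finsupp.single_le_iff.mpr hpos)).symm⟩
      

        rw [hν'] at hk hw ⊢
        rw [pderiv_monomial, one_mul]
        have hsub : (ν' + Finsupp.single i.castSucc 1) - Finsupp.single i.castSucc 1 = ν' := by
          simp
        rw [hsub, X, monomial_mul, one_mul,
          show (Finsupp.single i.succ 1 + ν') = ν' + Finsupp.single i.succ 1 from
            add_comm _ _,
          show ∀ (s : Fin (n+1) →₀ ℕ) (c : ℚ), (monomial s) c = c • monomial s 1 from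
            fun s c => by rw [smul_monomial, smul_eq_mul, mul_one]]
        refine Submodule.smul_mem _ _ (Submodule.subset_span ?_)
        refine ⟨ν' + Finsupp.single i.succ 1, ?_, ?_, rfl⟩
        · have A := weighted_sum_add_single (fun _ => 1) ν' i.castSucc
          have B := weighted_sum_add_single (fun _ => 1) ν' i.succ
          simp only [one_mul] at A B
          rw [B]
          rw [A] at hk
          omega
        · have A := weighted_sum_add_single (fun j : Fin (n+1) => (j:ℕ)) ν' i.castSucc
          have B := weighted_sum_add_single (fun j : Fin (n+1) => (j:ℕ)) ν' i.succ
          rw [B]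
          rw [A] at hw
          simp only [Fin.coe_castSucc, Fin.val_succ] at hw ⊢
          omega
  | zero => simp
  | add x y _ _ hx hy =>
      rw [map_add]; exact Submodule.add_mem _ hx hy
  | smul a x _ hx =>
      rw [map_smul]; exact Submodule.smul_mem _ _ hx

private lemma Q_zero (k w : ℕ) (hnk : n * k < w) {p : MvPolynomial (Fin (n+1)) ℚ}
    (hp : p ∈ Qspace n k w) : p = 0 := by
  induction hp using Submodule.span_induction with
  | mem x hx =>
      obtain ⟨ν, hk, hw, rfl⟩ := hx
      exfalso
      have hle : (∑ i : Fin (n+1), (i:ℕ) * ν i) ≤ ∑ i : Fin (n+1), n * ν i :=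
        Finset.sum_le_sum fun i _ => Nat.mul_le_mul_right _ (Fin.is_le i)
      rw [← Finset.mul_sum, hk, hw] at hle
      omega
  | zero => rfl
  | add x y _ _ hx hy => rw [hx, hy, add_zero]
  | smul a x _ hx => rw [hx, smul_zero]

end AuxSemi

/-- every semi-invariant of degree `k` and weight `nk/2` is an invariant. -/
theorem semiInvariant_is_invariant (n k m : ℕ) (h : n * k = 2 * m)
    (I : MvPolynomial (Fin (n+1)) ℚ) (hI : I ∈ Qspace n k m) (hD : Dop n I = 0) :
    Δop n I = 0 := by
  have hQmem : ∀ t : ℕ, ((Δop n) ^ t) I ∈ Qspace n k (m + t) := by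
    intro t
    induction t with
    | zero => simpa using hI
    | succ t ih =>
        have e : ((Δop n) ^ (t+1)) I = Δop n (((Δop n) ^ t) I) := by
          rw [pow_succ', Module.End.mul_apply]
        rw [e, show m + (t+1) = (m + t) + 1 by ring]
        exact Δ_mem k (m+t) ih
  have hcast : (n:ℚ) * k = 2 * m := by exact_mod_cast h
  have hDpow : ∀ t : ℕ, Dop n (((Δop n) ^ (t+1)) I)
      = (-((t:ℚ)+1) * (t:ℚ)) • ((Δop n) ^ t) I := by
    intro t
    induction t with
    | zero =>
        have hc := comm_Q (n := n) k m hI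
        rw [hD, map_zero, sub_zero, hcast, sub_self, zero_smul] at hc
        rw [pow_one, hc]
        simp
    | succ t ih =>
        have hc := comm_Q (n := n) k (m + (t+1)) (hQmem (t+1))
        have e : ((Δop n) ^ (t+1+1)) I = Δop n (((Δop n) ^ (t+1)) I) := by
          rw [pow_succ', Module.End.mul_apply]
        rw [e]
        have hx : Dop n (Δop n (((Δop n) ^ (t+1)) I))
            = Δop n (Dop n (((Δop n) ^ (t+1)) I))
              + ((n:ℚ) * k - 2 * ((m + (t+1) : ℕ) : ℚ)) • ((Δop n) ^ (t+1)) I := by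
          rw [← hc]; ring
        rw [hx, ih, map_smul]
        have e2 : Δop n (((Δop n) ^ t) I) = ((Δop n) ^ (t+1)) I := by
          rw [pow_succ', Module.End.mul_apply]
        rw [e2, ← add_smul]
        congr 1
        rw [hcast]
        push_cast
        ring
  have hvan : ((Δop n) ^ (m+1)) I = 0 := by
    refine Q_zero k (m + (m+1)) (by omega) (hQmem (m+1))
  have hdesc : ∀ j : ℕ, j ≤ m → ((Δop n) ^ (m+1-j)) I = 0 := by
    intro j
    induction j with
    | zero => intro _; simpa using hvan
    | succ j ih =>
        intro hj
        have h1 : ((Δop n) ^ (m+1-j)) I = 0 := ih (by omega)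
        have ht : m + 1 - j = (m - j) + 1 := by omega
        have h2 := hDpow (m - j)
        rw [← ht, h1, map_zero] at h2
        have htpos : 1 ≤ m - j := by omega
        have hne : (-(((m - j : ℕ):ℚ) + 1)) * ((m - j : ℕ):ℚ) ≠ 0 := by
          have hpos : (0:ℚ) < ((m - j : ℕ) : ℚ) := by exact_mod_cast htpos
          have hlt : (-(((m - j : ℕ):ℚ) + 1)) < 0 := by linarith
          exact mul_ne_zero (ne_of_lt hlt) (ne_of_gt hpos)
        have h3 : ((Δop n) ^ (m - j)) I = 0 := by
          have h4 := h2.symm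
          have h5 := congrArg
            (fun y => ((-(((m - j : ℕ):ℚ) + 1)) * ((m - j : ℕ):ℚ))⁻¹ • y) h4
          simp only [smul_smul, smul_zero, inv_mul_cancel₀ hne, one_smul] at h5
          exact h5
        rw [show m + 1 - (j+1) = m - j by omega]
        exact h3
  have hfin := hdesc m le_rfl
  rw [show m + 1 - m = 1 by omega, pow_one] at hfin
  exact hfin
end
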